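/- Let Q be a σ-fixed Dynkin quiver of type D_{n+1} (i.e. the height function satisfies ξ_n = ξ_{n+1}), and τ_Q its adapted Coxeter element, viewed as a signed permutation of {±1, ..., ±(n+1)}. Then τ_Q(n+1) = −(n+1) and τ_Q(−(n+1)) = n+1. -/

import Mathlib

/-- The simple reflections of the Weyl group of type `D_{n+1}` acting on the coordinate
space (0-based nodes `0, …, n`): node `k < n` swaps coordinates `k` and `k+1`; node `n`
sends `(v_{n−1}, v_n)` to `(−v_n, −v_{n−1})`. -/
noncomputable def sD (n k : ℕ) : Function.End (ℕ → ℝ) := fun v m =>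
  if k < n then
    (if m = k then v (k + 1) else if m = k + 1 then v k else v m)
  else
    (if m = n - 1 then -v n else if m = n then -(v (n - 1)) else v m)

/-- Product of the simple reflections of type `D_{n+1}` along a word. -/
noncomputable def wprodD (n : ℕ) (w : List ℕ) : Function.End (ℕ → ℝ) :=
  (w.map (sD n)).prod

/-- Adjacency in the Dynkin diagram of type `D_{n+1}` (0-based nodes `0, …, n`): the path
`0 − 1 − ⋯ − (n−1)` together with the extra node `n` attached to `n−2`. -/
def adjD (n a b : ℕ) : Prop :=
  ((a + 1 = b ∨ b + 1 = a) ∧ a ≤ n - 1 ∧ b ≤ n - 1) ∨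
  (a = n - 2 ∧ b = n) ∨ (a = n ∧ b = n - 2)

namespace Stmt18Aux

noncomputable def en (n : ℕ) (c : ℝ) : ℕ → ℝ := fun m => if m = n then c else 0

lemma sfix1 (n k : ℕ) (hk : k + 1 < n) (c : ℝ) : sD n k (en n c) = en n c := by
  funext m
  simp only [sD, en, if_pos (show k < n by omega)]
  split_ifs <;> first | rfl | omega

lemma sfix2 (n k : ℕ) (hk : k + 1 < n - 1) (c : ℝ) :
    sD n k (en (n - 1) c) = en (n - 1) c := by
  funext m
  simp only [sD, en, if_pos (show k < n by omega)]
  split_ifs <;> first | rfl | omega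

lemma sw1 (n : ℕ) (hn : 2 ≤ n) (c : ℝ) : sD n (n - 1) (en n c) = en (n - 1) c := by
  funext m
  simp only [sD, en, if_pos (show n - 1 < n by omega)]
  split_ifs <;> first | rfl | omega

lemma sw2 (n : ℕ) (hn : 2 ≤ n) (c : ℝ) : sD n (n - 1) (en (n - 1) c) = en n c := by
  funext m
  simp only [sD, en, if_pos (show n - 1 < n by omega)]
  split_ifs <;> first | rfl | omega

lemma sp1 (n : ℕ) (hn : 2 ≤ n) (c : ℝ) : sD n n (en n c) = en (n - 1) (-c) := by
  funext m
  simp only [sD, en, if_neg (lt_irrefl n)]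
  split_ifs <;> first | rfl | omega | simp

lemma sp2 (n : ℕ) (hn : 2 ≤ n) (c : ℝ) : sD n n (en (n - 1) c) = en n (-c) := by
  funext m
  simp only [sD, en, if_neg (lt_irrefl n)]
  split_ifs <;> first | rfl | omega | simp

lemma Wfix1 (n : ℕ) (l : List ℕ) (h : ∀ k ∈ l, k + 1 < n) (c : ℝ) :
    wprodD n l (en n c) = en n c := by
  induction l with
  | nil => rfl
  | cons a t ih =>
    have : wprodD n (a :: t) = sD n a * wprodD n t := by
      simp [wprodD, List.map_cons, List.prod_cons]
    rw [this]
    show sD n a (wprodD n t (en n c)) = en n c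
    rw [ih (fun k hk => h k (List.mem_cons_of_mem _ hk)), sfix1 n a (h a (List.mem_cons_self))]

lemma Wfix2 (n : ℕ) (l : List ℕ) (h : ∀ k ∈ l, k + 1 < n - 1) (c : ℝ) :
    wprodD n l (en (n - 1) c) = en (n - 1) c := by
  induction l with
  | nil => rfl
  | cons a t ih =>
    have : wprodD n (a :: t) = sD n a * wprodD n t := by
      simp [wprodD, List.map_cons, List.prod_cons]
    rw [this]
    show sD n a (wprodD n t (en (n - 1) c)) = en (n - 1) c
    rw [ih (fun k hk => h k (List.mem_cons_of_mem _ hk)), sfix2 n a (h a (List.mem_cons_self))]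

lemma key (n : ℕ) (hn : 2 ≤ n) (A1 A2 B : List ℕ) (a b : ℕ)
    (hab : (a = n - 1 ∧ b = n) ∨ (a = n ∧ b = n - 1))
    (h1 : ∀ k ∈ A1, k + 1 < n) (h2 : ∀ k ∈ A2, k + 1 < n - 1)
    (h3 : ∀ k ∈ B, k + 1 < n) (c : ℝ) :
    wprodD n (A1 ++ a :: (A2 ++ b :: B)) (en n c) = en n (-c) := by
  have hsplit : wprodD n (A1 ++ a :: (A2 ++ b :: B)) =
      wprodD n A1 * (sD n a * (wprodD n A2 * (sD n b * wprodD n B))) := by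
    simp [wprodD, List.map_append, List.prod_append, List.map_cons, List.prod_cons, mul_assoc]
  rw [hsplit]
  show wprodD n A1 (sD n a (wprodD n A2 (sD n b (wprodD n B (en n c))))) = en n (-c)
  rw [Wfix1 n B h3 c]
  rcases hab with ⟨ha, hb⟩ | ⟨ha, hb⟩ <;> rw [ha, hb]
  · rw [sp1 n hn c, Wfix2 n A2 h2 (-c), sw2 n hn (-c), Wfix1 n A1 h1 (-c)]
  · rw [sw1 n hn c, Wfix2 n A2 h2 c, sp2 n hn c, Wfix1 n A1 h1 (-c)]

lemma mem_take_of_indexOf_lt {l : List ℕ} {a k : ℕ} (h : a ∈ l) (hk : l.idxOf a < k) :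
    a ∈ l.take k := by
  induction l generalizing k with
  | nil => cases h
  | cons x t ih =>
    by_cases hx : a = x
    · subst hx
      cases k with
      | zero => simp [List.idxOf_cons_self] at hk
      | succ k => simp [List.take]
    · have hmem : a ∈ t := by
        rcases List.mem_cons.1 h with h' | h'
        · exact absurd h' hx
        · exact h'
      have hidx : (x :: t).idxOf a = t.idxOf a + 1 :=
        List.idxOf_cons_ne _ (Ne.symm hx)
      cases k with
      | zero => omega
      | succ k =>
        rw [hidx] at hk
        simp only [List.take]
        exact List.mem_cons_of_mem _ (ih hmem (by omega))

lemma indexOf_lt_of_mem_take {l : List ℕ} {a k : ℕ} (h : a ∈ l.take k) :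
    l.idxOf a < k := by
  induction l generalizing k with
  | nil => simp at h
  | cons x t ih =>
    cases k with
    | zero => simp at h
    | succ k =>
      simp only [List.take] at h
      by_cases hx : a = x
      · subst hx; simp [List.idxOf_cons_self]
      · have hmem : a ∈ t.take k := by
          rcases List.mem_cons.1 h with h' | h'
          · exact absurd h' hx
          · exact h'
        rw [List.idxOf_cons_ne _ (Ne.symm hx)]
        exact Nat.succ_lt_succ (ih hmem)

lemma split_at (l : List ℕ) (a : ℕ) (h : a ∈ l) :
    l = l.take (l.idxOf a) ++ a :: l.drop (l.idxOf a + 1) := by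
  induction l with
  | nil => cases h
  | cons x t ih =>
    by_cases hx : a = x
    · subst hx; simp [List.idxOf_cons_self]
    · have hmem : a ∈ t := by
        rcases List.mem_cons.1 h with h' | h'
        · exact absurd h' hx
        · exact h'
      rw [List.idxOf_cons_ne _ (Ne.symm hx)]
      simpa using congrArg (x :: ·) (ih hmem)

lemma not_mem_take_indexOf (l : List ℕ) (a : ℕ) : a ∉ l.take (l.idxOf a) := by
  intro h
  exact lt_irrefl _ (indexOf_lt_of_mem_take h)

end Stmt18Aux

namespace Stmt18Aux

lemma helper (n : ℕ) (hn : 2 ≤ n) (w : List ℕ) (hnd : w.Nodup)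
    (hall : ∀ k, k ∈ w ↔ k ≤ n) (a b : ℕ)
    (hab : (a = n - 1 ∧ b = n) ∨ (a = n ∧ b = n - 1))
    (hlt : w.idxOf a < w.idxOf b)
    (hn2 : ∀ k, k ∈ w → w.idxOf a < w.idxOf k → w.idxOf k < w.idxOf b → k ≠ n - 2)
    (c : ℝ) : wprodD n w (en n c) = en n (-c) := by
  have hane : a ≠ b := by rcases hab with ⟨ha, hb⟩ | ⟨ha, hb⟩ <;> omega
  have hamem : a ∈ w := (hall a).2 (by rcases hab with ⟨ha, _⟩ | ⟨ha, _⟩ <;> omega)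
  have hbmem : b ∈ w := (hall b).2 (by rcases hab with ⟨_, hb⟩ | ⟨_, hb⟩ <;> omega)
  set q := w.idxOf b with hq
  set A := w.take q with hA
  set B := w.drop (q + 1) with hB
  have hw1 : w = A ++ b :: B := split_at w b hbmem
  have hbA : b ∉ A := not_mem_take_indexOf w b
  have haA : a ∈ A := mem_take_of_indexOf_lt hamem hlt
  have hndA : A.Nodup := hnd.sublist (List.take_sublist _ _)
  have hnd1 : (A ++ b :: B).Nodup := hw1 ▸ hnd
  have hdisj : List.Disjoint A (b :: B) := fun x hx1 hx2 => (List.nodup_append.1 hnd1).2.2 x hx1 x hx2 rfl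
  have hndB : (b :: B).Nodup := (List.nodup_append.1 hnd1).2.1
  set p' := A.idxOf a with hp'
  set A1 := A.take p' with hA1
  set A2 := A.drop (p' + 1) with hA2
  have hw2 : A = A1 ++ a :: A2 := split_at A a haA
  have haA1 : a ∉ A1 := not_mem_take_indexOf A a
  have hnd2 : (A1 ++ a :: A2).Nodup := hw2 ▸ hndA
  have hdisjA : List.Disjoint A1 (a :: A2) := fun x hx1 hx2 => (List.nodup_append.1 hnd2).2.2 x hx1 x hx2 rfl
  have hndA2 : (a :: A2).Nodup := (List.nodup_append.1 hnd2).2.1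
  -- index of members of A in w equals index in A
  have hidxA : ∀ k, k ∈ A → w.idxOf k = A.idxOf k := by
    intro k hk
    have := congrArg (fun l => l.idxOf k) hw1
    simpa [List.idxOf_append_of_mem hk] using this
  -- bounds on elements
  have hsubA : ∀ k, k ∈ A → k ≤ n := fun k hk => (hall k).1 (List.take_subset _ _ hk)
  have hb1 : ∀ k ∈ A1, k + 1 < n := by
    intro k hk
    have hkA : k ∈ A := hw2 ▸ List.mem_append_left _ hk
    have h1 : k ≠ a := fun h => haA1 (h ▸ hk)
    have h2 : k ≠ b := fun h => hbA (h ▸ hkA)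
    have := hsubA k hkA
    rcases hab with ⟨ha, hbb⟩ | ⟨ha, hbb⟩ <;> omega
  have hb3 : ∀ k ∈ B, k + 1 < n := by
    intro k hk
    have hkw : k ∈ w := List.drop_subset _ _ hk
    have h1 : k ≠ b := fun h => ((List.nodup_cons.1 hndB).1) (h ▸ hk)
    have h2 : k ≠ a := fun h => (hdisj haA) (h ▸ List.mem_cons_of_mem _ hk)
    have := (hall k).1 hkw
    rcases hab with ⟨ha, hbb⟩ | ⟨ha, hbb⟩ <;> omega
  have hb2 : ∀ k ∈ A2, k + 1 < n - 1 := by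
    intro k hk
    have hkA : k ∈ A := hw2 ▸ List.mem_append_right _ (List.mem_cons_of_mem _ hk)
    have hkw : k ∈ w := List.take_subset _ _ hkA
    have h1 : k ≠ a := fun h => ((List.nodup_cons.1 hndA2).1) (h ▸ hk)
    have h2 : k ≠ b := fun h => hbA (h ▸ hkA)
    -- w.idxOf k strictly between those of a and b
    have hup : w.idxOf k < w.idxOf b := indexOf_lt_of_mem_take hkA
    have hlow : A.idxOf a < A.idxOf k := by
      by_contra hcon
      push_neg at hcon
      have hkle : A.idxOf k < p' + 1 := by omega
      have : k ∈ A.take (p' + 1) := mem_take_of_indexOf_lt hkA hkle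
      exact (List.disjoint_take_drop hndA (le_refl (p' + 1))) this hk
    have hlow' : w.idxOf a < w.idxOf k := by
      rw [hidxA a haA, hidxA k hkA]; exact hlow
    have h3 : k ≠ n - 2 := hn2 k hkw hlow' hup
    have := hsubA k hkA
    rcases hab with ⟨ha, hbb⟩ | ⟨ha, hbb⟩ <;> omega
  have hW : w = A1 ++ a :: (A2 ++ b :: B) := by
    rw [hw1, hw2]; simp
  rw [congrArg (wprodD n) hW]
  exact key n hn A1 A2 B a b hab hb1 hb2 hb3 c

end Stmt18Aux

open Stmt18Aux

/-- For a `σ`-fixed Dynkin quiver `Q` of type `D_{n+1}` (i.e. `ξ_{n−1} = ξ_n` for the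
height function, 0-based), the adapted Coxeter element `τ_Q`, viewed as a signed
permutation, satisfies `τ_Q(n+1) = −(n+1)` and `τ_Q(−(n+1)) = n+1`, i.e. it sends the
last basis vector to its negative and conversely. -/
theorem stmt18 (n : ℕ) (hn : 2 ≤ n) (ξ : ℕ → ℤ)
    (hheight : ∀ a b, adjD n a b → ξ a = ξ b + 1 ∨ ξ b = ξ a + 1)
    (hfix : ξ (n - 1) = ξ n)
    (w : List ℕ) (hnd : w.Nodup) (hall : ∀ k, k ∈ w ↔ k ≤ n)
    (hadapt : ∀ a b, adjD n a b → ξ a = ξ b + 1 → w.idxOf a < w.idxOf b) :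
    (wprodD n w (fun m => if m = n then (1 : ℝ) else 0) =
      fun m => if m = n then (-1 : ℝ) else 0) ∧
    (wprodD n w (fun m => if m = n then (-1 : ℝ) else 0) =
      fun m => if m = n then (1 : ℝ) else 0) := by
  have hmem1 : (n - 1) ∈ w := (hall _).2 (by omega)
  have hmemn : n ∈ w := (hall _).2 le_rfl
  have hadj1 : adjD n (n - 2) (n - 1) := Or.inl ⟨Or.inl (by omega), by omega, by omega⟩
  have hadj1' : adjD n (n - 1) (n - 2) := Or.inl ⟨Or.inr (by omega), by omega, by omega⟩
  have hadj2 : adjD n (n - 2) n := Or.inr (Or.inl ⟨rfl, rfl⟩)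
  have hadj3 : adjD n n (n - 2) := Or.inr (Or.inr ⟨rfl, rfl⟩)
  have hpos : (w.idxOf (n - 2) < w.idxOf (n - 1) ∧ w.idxOf (n - 2) < w.idxOf n) ∨
      (w.idxOf (n - 1) < w.idxOf (n - 2) ∧ w.idxOf n < w.idxOf (n - 2)) := by
    rcases hheight _ _ hadj1 with h | h
    · exact Or.inl ⟨hadapt _ _ hadj1 h, hadapt _ _ hadj2 (by rw [← hfix]; exact h)⟩
    · exact Or.inr ⟨hadapt _ _ hadj1' h, hadapt _ _ hadj3 (by rw [← hfix]; exact h)⟩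
  have hne : w.idxOf (n - 1) ≠ w.idxOf n := by
    intro h
    have := (List.idxOf_inj hmem1).1 h
    omega
  have hmain : ∀ c : ℝ, wprodD n w (en n c) = en n (-c) := by
    intro c
    rcases Nat.lt_or_ge (w.idxOf (n - 1)) (w.idxOf n) with hlt | hge
    · refine helper n hn w hnd hall (n - 1) n (Or.inl ⟨rfl, rfl⟩) hlt ?_ c
      intro k hk h1 h2 heq
      rw [heq] at h1 h2
      omega
    · have hlt : w.idxOf n < w.idxOf (n - 1) := by omega
      refine helper n hn w hnd hall n (n - 1) (Or.inr ⟨rfl, rfl⟩) hlt ?_ c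
      intro k hk h1 h2 heq
      rw [heq] at h1 h2
      omega
  constructor
  · exact hmain 1
  · have h := hmain (-1)
    have : (-(-1 : ℝ)) = 1 := by norm_num
    rw [this] at h
    exact h
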